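/- Shadowing-time separation identity: let x have shadowing times n_1^± < n_2^± < ... (the times at which the one-sided cylinder strictly shrinks). If n_{i+1}^± - n_i^± ≥ N_0 (where N_0 ensures unambiguous closest critical point), then the separation time of the iterate satisfies s(f^{n_i^±}(x)) = n_{i+1}^± - n_i^±. -/
import Mathlib


open Filter Set

/-- The index of the partition element (determined by the critical set `C`)
containing `x`: the number of critical points lying strictly below `x`. -/
noncomputable def idx (C : Set ℝ) (x : ℝ) : ℕ :=
  Nat.card {c : ℝ // c ∈ C ∧ c < x}

/-- The `n`-th cylinder set of `x`. -/
def cyl (f : ℝ → ℝ) (C : Set ℝ) (x : ℝ) (n : ℕ) : Set ℝ :=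
  {z : ℝ | ∀ i ≤ n, idx C (f^[i] z) = idx C (f^[i] x)}

/-- The symbolic separation time of `y` and `x`. -/
noncomputable def sep (f : ℝ → ℝ) (C : Set ℝ) (y x : ℝ) : ℕ :=
  sInf {k : ℕ | idx C (f^[k] y) ≠ idx C (f^[k] x)}

/-- The separation time of `x` from the critical set `C`. -/
noncomputable def sepTime (f : ℝ → ℝ) (C : Set ℝ) (x : ℝ) : ℕ :=
  sSup {s : ℕ | ∃ c ∈ C, s = sep f C x c}

/-- Shadowing-time separation identity: let `n₁ < n₂` be successive (right)
shadowing times of `x`, so that the right part of the `m`-th cylinder of `x` equals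
`[x, z]` for `n₁ ≤ m < n₂` and shrinks to `[x, w]` at time `n₂`, with
`f^{n₁}(z) = c̃ ∈ C`, `f^{n₂}(w) ∈ C` and `f^{n₂}` monotone on `[x, z]`. Then
`s(f^{n₁}(x), c̃) = n₂ - n₁`, and if `n₂ - n₁ ≥ N₀` (where `N₀` guarantees an
unambiguous closest critical point) then `s(f^{n₁}(x)) = n₂ - n₁`. -/
theorem stmt_17 (f : ℝ → ℝ) (C : Set ℝ) (x z w : ℝ) (n₁ n₂ N₀ : ℕ)
    (hn : n₁ < n₂) (hxz : x < z) (hwz : x ≤ w ∧ w < z)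
    (hCz : f^[n₁] z ∈ C) (hCw : f^[n₂] w ∈ C)
    (hcylconst : ∀ m : ℕ, n₁ ≤ m → m < n₂ → cyl f C x m ∩ Set.Ici x = Set.Icc x z)
    (hcyl2 : cyl f C x n₂ ∩ Set.Ici x = Set.Icc x w)
    (hmono : StrictMonoOn (f^[n₂]) (Set.Icc x z) ∨ StrictAntiOn (f^[n₂]) (Set.Icc x z))
    (hN₀ : ∀ u : ℝ, ∀ c ∈ C, N₀ ≤ sep f C u c → sepTime f C u = sep f C u c) :
    sep f C (f^[n₁] x) (f^[n₁] z) = n₂ - n₁ ∧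
    (N₀ ≤ n₂ - n₁ → sepTime f C (f^[n₁] x) = n₂ - n₁) := by
  have hz1 : z ∈ cyl f C x (n₂ - 1) := by
    have h := hcylconst (n₂ - 1) (by omega) (by omega)
    have hmem : z ∈ cyl f C x (n₂ - 1) ∩ Set.Ici x := by
      rw [h]; exact ⟨le_of_lt hxz, le_refl z⟩
    exact hmem.1
  have hz2 : z ∉ cyl f C x n₂ := by
    intro h
    have hmem : z ∈ cyl f C x n₂ ∩ Set.Ici x := ⟨h, le_of_lt hxz⟩
    rw [hcyl2] at hmem
    exact absurd hmem.2 (not_le.mpr hwz.2)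
  have hne : idx C (f^[n₂] z) ≠ idx C (f^[n₂] x) := by
    intro h
    apply hz2
    intro i hi
    rcases Nat.lt_or_ge i n₂ with h' | h'
    · exact hz1 i (by omega)
    · have : i = n₂ := le_antisymm hi h'
      rw [this]; exact h
  have key : sep f C (f^[n₁] x) (f^[n₁] z) = n₂ - n₁ := by
    unfold sep
    have hmem : (n₂ - n₁) ∈ {k : ℕ | idx C (f^[k] (f^[n₁] x)) ≠ idx C (f^[k] (f^[n₁] z))} := by
      simp only [Set.mem_setOf_eq, ← Function.iterate_add_apply]
      have he : n₂ - n₁ + n₁ = n₂ := by omega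
      rw [he]
      exact fun h => hne h.symm
    apply le_antisymm
    · exact Nat.sInf_le hmem
    · apply le_csInf ⟨_, hmem⟩
      intro k hk
      by_contra hlt
      push_neg at hlt
      apply hk
      simp only [← Function.iterate_add_apply]
      exact (hz1 (k + n₁) (by omega)).symm
  exact ⟨key, fun hN => by rw [hN₀ (f^[n₁] x) (f^[n₁] z) hCz (key ▸ hN), key]⟩
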